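/- For all a, b, τ > 0 with |1 − 1/τ²| < 1, s ∈ ℝ, and t ∈ ℝ: if κ is distributed according to the hypergeometric-beta density π_{a,b,τ,s}, then its moment-generating function satisfies E[e^{tκ}] = ∫₀¹ e^{tκ} π_{a,b,τ,s}(κ) dκ = e^{t} Φ₁(b, 1; a+b; s−t, 1−1/τ²) / Φ₁(b, 1; a+b; s, 1−1/τ²). -/

import Mathlib

open MeasureTheory Set

/-- The unnormalized hypergeometric-beta kernel
`κ^{a−1} (1−κ)^{b−1} {1/τ² + (1 − 1/τ²)κ}^{−1} e^{−sκ}`. -/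
noncomputable def hbKer (a b τ s κ : ℝ) : ℝ :=
  κ ^ (a - 1) * (1 - κ) ^ (b - 1) * (1 / τ ^ 2 + (1 - 1 / τ ^ 2) * κ)⁻¹ *
    Real.exp (-(s * κ))

/-- The normalizing constant `C(a,b,τ,s)`. -/
noncomputable def hbC (a b τ s : ℝ) : ℝ :=
  ∫ κ in Set.Ioo (0 : ℝ) 1, hbKer a b τ s κ

/-- The hypergeometric-beta density `π_{a,b,τ,s}` on `(0,1)`. -/
noncomputable def hbPdf (a b τ s κ : ℝ) : ℝ :=
  (hbC a b τ s)⁻¹ * hbKer a b τ s κ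

/-- The rising factorial `(q)_k = q (q+1) ⋯ (q+k−1)`. -/
noncomputable def risingFac (q : ℝ) (k : ℕ) : ℝ :=
  ∏ i ∈ Finset.range k, (q + (i : ℝ))

/-- The degenerate (Humbert) hypergeometric function of two variables
`Φ₁(α, β; γ; x, y) = Σ_{m,n≥0} [(α)_{m+n} (β)_n / ((γ)_{m+n} m! n!)] x^m y^n`. -/
noncomputable def Phi1 (α β γ x y : ℝ) : ℝ :=
  ∑' p : ℕ × ℕ,
    risingFac α (p.1 + p.2) * risingFac β p.2 /
      (risingFac γ (p.1 + p.2) * (Nat.factorial p.1) * (Nat.factorial p.2)) *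
      x ^ p.1 * y ^ p.2

/-- The Euler beta function `B(a,b) = Γ(a)Γ(b)/Γ(a+b)`. -/
noncomputable def betaFn (a b : ℝ) : ℝ :=
  Real.Gamma a * Real.Gamma b / Real.Gamma (a + b)

/-! ### Auxiliary lemmas -/

lemma risingFac_pos {q : ℝ} (hq : 0 < q) (k : ℕ) : 0 < risingFac q k :=
  Finset.prod_pos fun i _ => by positivity

lemma risingFac_one (n : ℕ) : risingFac 1 n = (n.factorial : ℝ) := by
  rw [risingFac, ← Finset.prod_range_add_one_eq_factorial n]
  push_cast
  exact Finset.prod_congr rfl fun i _ => by ring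

lemma Gamma_add_nat {q : ℝ} (hq : 0 < q) (k : ℕ) :
    Real.Gamma (q + k) = Real.Gamma q * risingFac q k := by
  induction k with
  | zero => simp [risingFac]
  | succ n ih =>
    have h1 : q + ((n + 1 : ℕ) : ℝ) = (q + n) + 1 := by push_cast; ring
    rw [h1, Real.Gamma_add_one (by positivity), ih]
    simp only [risingFac, Finset.prod_range_succ]
    ring

lemma betaFn_pos {u v : ℝ} (hu : 0 < u) (hv : 0 < v) : 0 < betaFn u v := by
  have h1 := Real.Gamma_pos_of_pos hu
  have h2 := Real.Gamma_pos_of_pos hv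
  have h3 := Real.Gamma_pos_of_pos (show (0:ℝ) < u + v by linarith)
  exact div_pos (mul_pos h1 h2) h3

lemma betaFn_add_nat {u v : ℝ} (hu : 0 < u) (hv : 0 < v) (k : ℕ) :
    betaFn (u + k) v = betaFn v u * risingFac u k / risingFac (v + u) k := by
  have h1 : u + (k : ℝ) + v = (v + u) + k := by ring
  rw [betaFn, Gamma_add_nat hu k, h1, Gamma_add_nat (by positivity) k, betaFn]
  have h2 : Real.Gamma (v + u) ≠ 0 := (Real.Gamma_pos_of_pos (by positivity)).ne'
  have h3 : risingFac (v + u) k ≠ 0 := (risingFac_pos (by positivity) k).ne'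
  field_simp

/-- The real Beta integral: integrability. -/
lemma integrableOn_betaKer {u v : ℝ} (hu : 0 < u) (hv : 0 < v) :
    IntegrableOn (fun x : ℝ => x ^ (u - 1) * (1 - x) ^ (v - 1)) (Ioo (0 : ℝ) 1) := by
  have hc := (Complex.betaIntegral_convergent (u := (u : ℂ)) (v := (v : ℂ))
    (by simpa using hu) (by simpa using hv)).norm
  have hc' : IntegrableOn
      (fun x : ℝ => ‖(x : ℂ) ^ ((u : ℂ) - 1) * (1 - (x : ℂ)) ^ ((v : ℂ) - 1)‖)
      (Ioo (0 : ℝ) 1) := by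
    have := (intervalIntegrable_iff_integrableOn_Ioo_of_le (μ := volume)
      (by norm_num : (0:ℝ) ≤ 1)).mp hc
    exact this
  refine hc'.congr_fun (fun x hx => ?_) measurableSet_Ioo
  have hx0 : 0 < x := hx.1
  have hx1 : 0 < 1 - x := by linarith [hx.2]
  show ‖(x:ℂ) ^ ((u:ℂ) - 1) * (1 - (x:ℂ)) ^ ((v:ℂ) - 1)‖ = _
  rw [norm_mul]
  have e1 : (1 : ℂ) - (x : ℝ) = ((1 - x : ℝ) : ℂ) := by push_cast; ring
  rw [e1, Complex.norm_cpow_eq_rpow_re_of_pos hx0, Complex.norm_cpow_eq_rpow_re_of_pos hx1]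
  norm_num

/-- The real Beta integral: value. -/
lemma integral_betaKer {u v : ℝ} (hu : 0 < u) (hv : 0 < v) :
    ∫ x in Ioo (0 : ℝ) 1, x ^ (u - 1) * (1 - x) ^ (v - 1) = betaFn u v := by
  have hΓ : Real.Gamma (u + v) ≠ 0 :=
    (Real.Gamma_pos_of_pos (by positivity : (0:ℝ) < u + v)).ne'
  have hbeta : Complex.betaIntegral u v = ((betaFn u v : ℝ) : ℂ) := by
    have h := Complex.Gamma_mul_Gamma_eq_betaIntegral (s := (u:ℂ)) (t := (v:ℂ))
      (by simpa using hu) (by simpa using hv)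
    have e : ((u : ℂ) + v) = ((u + v : ℝ) : ℂ) := by push_cast; ring
    rw [e, Complex.Gamma_ofReal, Complex.Gamma_ofReal, Complex.Gamma_ofReal] at h
    have hΓ' : ((Real.Gamma (u + v) : ℝ) : ℂ) ≠ 0 := by exact_mod_cast hΓ
    rw [betaFn]
    push_cast
    rw [eq_div_iff hΓ']
    rw [h]
    ring
  have hint : Complex.betaIntegral u v =
      ((∫ x in Ioo (0 : ℝ) 1, x ^ (u - 1) * (1 - x) ^ (v - 1) : ℝ) : ℂ) := by
    rw [Complex.betaIntegral, intervalIntegral.integral_of_le (by norm_num : (0:ℝ) ≤ 1),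
      ← MeasureTheory.integral_Ioc_eq_integral_Ioo,
      show ((∫ t in Ioc (0:ℝ) 1, t ^ (u-1)*(1-t)^(v-1) : ℝ) : ℂ)
        = ∫ t in Ioc (0:ℝ) 1, ((t ^ (u-1)*(1-t)^(v-1) : ℝ) : ℂ) from integral_ofReal.symm]
    refine setIntegral_congr_fun measurableSet_Ioc fun x hx => ?_
    have hx0 : (0:ℝ) ≤ x := le_of_lt hx.1
    have hx1 : (0:ℝ) ≤ 1 - x := by linarith [hx.2]
    rw [Complex.ofReal_mul, Complex.ofReal_cpow hx0, Complex.ofReal_cpow hx1]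
    push_cast
    ring
  have := hbeta.symm.trans hint
  exact_mod_cast this.symm

/-- Pulling `1 - x` through the integral over `(0,1)`. -/
lemma integral_Ioo_comp_one_sub (f : ℝ → ℝ) :
    ∫ x in Ioo (0 : ℝ) 1, f (1 - x) = ∫ x in Ioo (0 : ℝ) 1, f x := by
  rw [← MeasureTheory.integral_Ioc_eq_integral_Ioo, ← MeasureTheory.integral_Ioc_eq_integral_Ioo,
    ← intervalIntegral.integral_of_le (by norm_num : (0:ℝ) ≤ 1),
    ← intervalIntegral.integral_of_le (by norm_num : (0:ℝ) ≤ 1),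
    intervalIntegral.integral_comp_sub_left f 1]
  norm_num

lemma betaKer_le {u v : ℝ} (hu : 0 < u) (hv : 0 < v) (k : ℕ) :
    betaFn (u + k) v ≤ betaFn u v := by
  rw [← integral_betaKer hu hv, ← integral_betaKer (by positivity : (0:ℝ) < u + k) hv]
  refine setIntegral_mono_on (integrableOn_betaKer (by positivity) hv)
    (integrableOn_betaKer hu hv) measurableSet_Ioo fun x hx => ?_
  have hx0 : 0 < x := hx.1
  have hx1 : x ≤ 1 := le_of_lt hx.2
  have : x ^ (u + k - 1) ≤ x ^ (u - 1) :=
    Real.rpow_le_rpow_of_exponent_ge hx0 hx1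
      (by have := Nat.cast_nonneg (α := ℝ) k; linarith)
  have h2 : (0:ℝ) ≤ (1 - x) ^ (v - 1) := Real.rpow_nonneg (by linarith [hx.2]) _
  exact mul_le_mul_of_nonneg_right this h2

lemma tsum_expand (A c1 c2 : ℝ) (hc2 : |c2| < 1) :
    ∑' p : ℕ × ℕ, A * ((c1 ^ p.1 / p.1.factorial) * c2 ^ p.2) =
      A * (Real.exp c1 * (1 - c2)⁻¹) := by
  have h1 : Summable (fun m : ℕ => c1 ^ m / m.factorial) :=
    Real.summable_pow_div_factorial _
  have h2 : Summable (fun n : ℕ => c2 ^ n) :=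
    summable_geometric_of_norm_lt_one (by rwa [Real.norm_eq_abs])
  have hS : Summable (fun p : ℕ × ℕ => (c1 ^ p.1 / p.1.factorial) * c2 ^ p.2) := by
    apply Summable.of_abs
    have habs := Summable.mul_of_nonneg h1.abs h2.abs
      (fun m => abs_nonneg _) (fun n => abs_nonneg _)
    simpa [abs_mul] using habs
  have hexp : ∑' m : ℕ, c1 ^ m / m.factorial = Real.exp c1 := by
    rw [Real.exp_eq_exp_ℝ, NormedSpace.exp_eq_tsum_div]
  have hgeo : ∑' n : ℕ, c2 ^ n = (1 - c2)⁻¹ := tsum_geometric_of_abs_lt_one hc2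
  rw [tsum_mul_left, Summable.tsum_prod' hS (fun m => h2.mul_left (c1 ^ m / m.factorial))]
  congr 1
  calc ∑' (m : ℕ) (n : ℕ), (c1 ^ m / m.factorial) * c2 ^ n
      = ∑' m : ℕ, (c1 ^ m / m.factorial) * (1 - c2)⁻¹ := by
        refine tsum_congr fun m => ?_
        rw [tsum_mul_left, hgeo]
    _ = Real.exp c1 * (1 - c2)⁻¹ := by rw [tsum_mul_right, hexp]

set_option maxHeartbeats 1000000 in
/-- The core expansion: the Humbert-type integral as a double series. -/
lemma core {u v : ℝ} (y s' : ℝ) (hu : 0 < u) (hv : 0 < v) (hy : |y| < 1) :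
    ∫ x in Ioo (0 : ℝ) 1,
        x ^ (u - 1) * (1 - x) ^ (v - 1) * (1 - y * x)⁻¹ * Real.exp (s' * x) =
      betaFn v u * Phi1 u 1 (v + u) s' y := by
  set g : ℕ × ℕ → ℝ → ℝ := fun p x =>
    x ^ (u - 1) * (1 - x) ^ (v - 1) * ((s' * x) ^ p.1 / p.1.factorial) * (y * x) ^ p.2 with hg
  have hgeq : ∀ p : ℕ × ℕ, ∀ x ∈ Ioo (0:ℝ) 1,
      g p x = (s' ^ p.1 / p.1.factorial * y ^ p.2) *
        (x ^ (u + p.1 + p.2 - 1) * (1 - x) ^ (v - 1)) := by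
    intro p x hx
    have hx0 : 0 < x := hx.1
    have e1 : x ^ (u + p.1 + p.2 - 1) = x ^ (u - 1) * x ^ p.1 * x ^ p.2 := by
      rw [← Real.rpow_natCast x p.1, ← Real.rpow_natCast x p.2, ← Real.rpow_add hx0,
        ← Real.rpow_add hx0]
      congr 1
      push_cast
      ring
    rw [hg]
    simp only []
    rw [e1, mul_pow, mul_pow]
    ring
  have hup : ∀ p : ℕ × ℕ, (0:ℝ) < u + p.1 + p.2 := by
    intro p
    have h1 := Nat.cast_nonneg (α := ℝ) p.1
    have h2 := Nat.cast_nonneg (α := ℝ) p.2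
    linarith
  have hgint : ∀ p : ℕ × ℕ, IntegrableOn (g p) (Ioo (0:ℝ) 1) := by
    intro p
    refine IntegrableOn.congr_fun ?_ (fun x hx => (hgeq p x hx).symm) measurableSet_Ioo
    exact (integrableOn_betaKer (hup p) hv).const_mul _
  have hnormval : ∀ p : ℕ × ℕ, ∫ x in Ioo (0:ℝ) 1, ‖g p x‖ =
      |s'| ^ p.1 / p.1.factorial * |y| ^ p.2 * betaFn (u + p.1 + p.2) v := by
    intro p
    have : ∀ x ∈ Ioo (0:ℝ) 1, ‖g p x‖ =
        (|s'| ^ p.1 / p.1.factorial * |y| ^ p.2) *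
          (x ^ (u + p.1 + p.2 - 1) * (1 - x) ^ (v - 1)) := by
      intro x hx
      rw [Real.norm_eq_abs, hgeq p x hx, abs_mul]
      have hk : (0:ℝ) ≤ x ^ (u + p.1 + p.2 - 1) * (1 - x) ^ (v - 1) :=
        mul_nonneg (Real.rpow_nonneg hx.1.le _) (Real.rpow_nonneg (by linarith [hx.2]) _)
      rw [abs_of_nonneg hk, abs_mul, abs_div, abs_pow, abs_pow, Nat.abs_cast]
    rw [setIntegral_congr_fun measurableSet_Ioo this, MeasureTheory.integral_const_mul _ _,
      integral_betaKer (hup p) hv]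
  have hgval : ∀ p : ℕ × ℕ, ∫ x in Ioo (0:ℝ) 1, g p x =
      s' ^ p.1 / p.1.factorial * y ^ p.2 * betaFn (u + p.1 + p.2) v := by
    intro p
    rw [setIntegral_congr_fun measurableSet_Ioo (hgeq p), MeasureTheory.integral_const_mul _ _,
      integral_betaKer (hup p) hv]
  have hbetle : ∀ p : ℕ × ℕ, betaFn (u + p.1 + p.2) v ≤ betaFn u v := by
    intro p
    have := betaKer_le hu hv (p.1 + p.2)
    rwa [show u + ((p.1 + p.2 : ℕ):ℝ) = u + p.1 + p.2 by push_cast; ring] at this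
  have hsum : Summable (fun p : ℕ × ℕ => ∫ x in Ioo (0:ℝ) 1, ‖g p x‖) := by
    rw [funext hnormval]
    have hmaj : Summable (fun p : ℕ × ℕ =>
        (|s'| ^ p.1 / p.1.factorial * |y| ^ p.2) * betaFn u v) := by
      refine Summable.mul_right _ ?_
      exact Summable.mul_of_nonneg (Real.summable_pow_div_factorial |s'|)
        (summable_geometric_of_lt_one (abs_nonneg y) hy)
        (fun m => by positivity) (fun n => by positivity)
    refine Summable.of_nonneg_of_le (fun p => ?_) (fun p => ?_) hmaj
    · have := (betaFn_pos (hup p) hv).le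
      positivity
    · exact mul_le_mul_of_nonneg_left (hbetle p) (by positivity)
  have hswap := integral_tsum_of_summable_integral_norm (μ := volume.restrict (Ioo (0:ℝ) 1))
    hgint hsum
  have hpt : ∀ x ∈ Ioo (0:ℝ) 1, ∑' p : ℕ × ℕ, g p x =
      x ^ (u - 1) * (1 - x) ^ (v - 1) * (1 - y * x)⁻¹ * Real.exp (s' * x) := by
    intro x hx
    have hyx : |y * x| < 1 := by
      rw [abs_mul, abs_of_pos hx.1]
      nlinarith [abs_nonneg y, hx.1, hx.2]
    have h0 : ∑' p : ℕ × ℕ, g p x = ∑' p : ℕ × ℕ,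
        (x ^ (u - 1) * (1 - x) ^ (v - 1)) *
          (((s' * x) ^ p.1 / p.1.factorial) * (y * x) ^ p.2) := by
      refine tsum_congr fun p => ?_
      simp only [hg]
      ring
    rw [h0, tsum_expand _ _ _ hyx]
    ring
  rw [← setIntegral_congr_fun measurableSet_Ioo hpt, ← hswap, funext hgval]
  rw [Phi1, ← tsum_mul_left]
  refine tsum_congr fun p => ?_
  rw [show u + (p.1:ℝ) + p.2 = u + ((p.1 + p.2 : ℕ):ℝ) by push_cast; ring,
    betaFn_add_nat hu hv, risingFac_one]
  have hr : risingFac (v + u) (p.1 + p.2) ≠ 0 := (risingFac_pos (by positivity) _).ne'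
  have hf1 : ((p.1.factorial : ℝ)) ≠ 0 := by exact_mod_cast p.1.factorial_ne_zero
  have hf2 : ((p.2.factorial : ℝ)) ≠ 0 := by exact_mod_cast p.2.factorial_ne_zero
  field_simp

/-- The closed form of the normalizing constant. -/
lemma hbC_eq (a b τ s : ℝ) (ha : 0 < a) (hb : 0 < b) (hτ' : |1 - 1 / τ ^ 2| < 1) :
    hbC a b τ s = Real.exp (-s) * (betaFn a b * Phi1 b 1 (a + b) s (1 - 1 / τ ^ 2)) := by
  have h : ∀ x ∈ Ioo (0:ℝ) 1, hbKer a b τ s (1 - x) =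
      Real.exp (-s) * (x ^ (b - 1) * (1 - x) ^ (a - 1) * (1 - (1 - 1 / τ ^ 2) * x)⁻¹ *
        Real.exp (s * x)) := by
    intro x hx
    rw [hbKer]
    have e1 : 1 / τ ^ 2 + (1 - 1 / τ ^ 2) * (1 - x) = 1 - (1 - 1 / τ ^ 2) * x := by ring
    have e2 : 1 - (1 - x) = x := by ring
    rw [e1, e2, show -(s * (1 - x)) = -s + s * x by ring, Real.exp_add]
    ring
  rw [hbC, ← integral_Ioo_comp_one_sub (hbKer a b τ s),
    setIntegral_congr_fun measurableSet_Ioo h, MeasureTheory.integral_const_mul _ _,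
    core (1 - 1 / τ ^ 2) s hb ha hτ']

lemma hbDen_pos {τ : ℝ} (hτ' : |1 - 1 / τ ^ 2| < 1) {x : ℝ} (hx : x ∈ Icc (0:ℝ) 1) :
    1 - |1 - 1 / τ ^ 2| ≤ 1 / τ ^ 2 + (1 - 1 / τ ^ 2) * x := by
  set y := 1 - 1 / τ ^ 2 with hy
  have e1 : 1 / τ ^ 2 + y * x = 1 - y * (1 - x) := by rw [hy]; ring
  rw [e1]
  have h1 : (0:ℝ) ≤ 1 - x := by linarith [hx.2]
  have h2 : y * (1 - x) ≤ |y| * (1 - x) := mul_le_mul_of_nonneg_right (le_abs_self y) h1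
  have h3 : |y| * (1 - x) ≤ |y| * 1 := mul_le_mul_of_nonneg_left (by linarith [hx.1]) (abs_nonneg y)
  linarith

lemma integrableOn_hbKer (a b τ s : ℝ) (ha : 0 < a) (hb : 0 < b)
    (hτ' : |1 - 1 / τ ^ 2| < 1) : IntegrableOn (hbKer a b τ s) (Ioo (0:ℝ) 1) := by
  have hpos : ∀ x ∈ Icc (0:ℝ) 1, 0 < 1 / τ ^ 2 + (1 - 1 / τ ^ 2) * x := by
    intro x hx
    have := hbDen_pos hτ' hx
    linarith
  have hcont : ContinuousOn (hbKer a b τ s) (Ioo (0:ℝ) 1) := by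
    apply ContinuousOn.mul
    apply ContinuousOn.mul
    apply ContinuousOn.mul
    · exact continuousOn_id.rpow_const (fun x hx => Or.inl (ne_of_gt hx.1))
    · refine (continuousOn_const.sub continuousOn_id).rpow_const (fun x hx => Or.inl ?_)
      have : (0:ℝ) < 1 - x := by linarith [hx.2]
      exact ne_of_gt (by simpa using this)
    · refine (continuousOn_const.add (continuousOn_const.mul continuousOn_id)).inv₀
        (fun x hx => ?_)
      exact ne_of_gt (by simpa using hpos x (Ioo_subset_Icc_self hx))
    · exact (Real.continuous_exp.comp (continuous_const.mul continuous_id).neg).continuousOn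
  refine Integrable.mono'
    ((integrableOn_betaKer ha hb).mul_const ((1 - |1 - 1 / τ ^ 2|)⁻¹ * Real.exp |s|))
    (hcont.aestronglyMeasurable measurableSet_Ioo) ?_
  rw [ae_restrict_iff' measurableSet_Ioo]
  refine Filter.Eventually.of_forall fun x hx => ?_
  have hx0 : 0 < x := hx.1
  have hx1 : 0 < 1 - x := by linarith [hx.2]
  have hxI : x ∈ Icc (0:ℝ) 1 := Ioo_subset_Icc_self hx
  have hd := hpos x hxI
  have hd' := hbDen_pos hτ' hxI
  have hy1 : (0:ℝ) < 1 - |1 - 1 / τ ^ 2| := by linarith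
  have hker : ‖hbKer a b τ s x‖ = (x ^ (a - 1) * (1 - x) ^ (b - 1)) *
      ((1 / τ ^ 2 + (1 - 1 / τ ^ 2) * x)⁻¹ * Real.exp (-(s * x))) := by
    rw [hbKer, Real.norm_eq_abs, abs_of_nonneg, mul_assoc]
    exact mul_nonneg (mul_nonneg (mul_nonneg (Real.rpow_nonneg hx0.le _)
      (Real.rpow_nonneg hx1.le _)) (inv_nonneg.mpr hd.le)) (Real.exp_pos _).le
  rw [hker]
  refine mul_le_mul_of_nonneg_left ?_
    (mul_nonneg (Real.rpow_nonneg hx0.le _) (Real.rpow_nonneg hx1.le _))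
  have h1 : (1 / τ ^ 2 + (1 - 1 / τ ^ 2) * x)⁻¹ ≤ (1 - |1 - 1 / τ ^ 2|)⁻¹ :=
    inv_anti₀ hy1 hd'
  have h2 : Real.exp (-(s * x)) ≤ Real.exp |s| := by
    apply Real.exp_le_exp.mpr
    have := abs_mul s x
    have hax : |x| ≤ 1 := by rw [abs_of_pos hx0]; linarith
    have := neg_abs_le (s * x)
    nlinarith [abs_nonneg s, abs_nonneg (s * x), neg_abs_le (s * x),
      mul_le_mul_of_nonneg_left hax (abs_nonneg s)]
  exact mul_le_mul h1 h2 (Real.exp_pos _).le (inv_nonneg.mpr hy1.le)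

lemma hbC_pos (a b τ s : ℝ) (ha : 0 < a) (hb : 0 < b) (hτ' : |1 - 1 / τ ^ 2| < 1) :
    0 < hbC a b τ s := by
  rw [hbC, ← MeasureTheory.integral_Ioc_eq_integral_Ioo,
    ← intervalIntegral.integral_of_le (by norm_num : (0:ℝ) ≤ 1)]
  refine intervalIntegral.intervalIntegral_pos_of_pos_on ?_ ?_ (by norm_num)
  · rw [intervalIntegrable_iff_integrableOn_Ioc_of_le (by norm_num)]
    exact (integrableOn_hbKer a b τ s ha hb hτ').congr_set_ae Ioo_ae_eq_Ioc.symm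
  · intro x hx
    have hd : 0 < 1 / τ ^ 2 + (1 - 1 / τ ^ 2) * x := by
      have := hbDen_pos hτ' (Ioo_subset_Icc_self hx)
      linarith
    exact mul_pos (mul_pos (mul_pos (Real.rpow_pos_of_pos hx.1 _)
      (Real.rpow_pos_of_pos (by linarith [hx.2]) _)) (inv_pos.mpr hd)) (Real.exp_pos _)

theorem hb_moment_generating_function (a b τ s t : ℝ) (ha : 0 < a) (hb : 0 < b)
    (hτ : 0 < τ) (hτ' : |1 - 1 / τ ^ 2| < 1) :
    ∫ κ in Set.Ioo (0 : ℝ) 1, Real.exp (t * κ) * hbPdf a b τ s κ =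
      Real.exp t * Phi1 b 1 (a + b) (s - t) (1 - 1 / τ ^ 2) /
        Phi1 b 1 (a + b) s (1 - 1 / τ ^ 2) := by
  have hkey : ∀ x : ℝ, Real.exp (t * x) * hbPdf a b τ s x =
      (hbC a b τ s)⁻¹ * hbKer a b τ (s - t) x := by
    intro x
    rw [hbPdf, hbKer, hbKer, show -((s - t) * x) = t * x + -(s * x) by ring, Real.exp_add]
    ring
  simp_rw [hkey]
  rw [MeasureTheory.integral_const_mul _ _]
  have h1 : (∫ x in Set.Ioo (0:ℝ) 1, hbKer a b τ (s - t) x) = hbC a b τ (s - t) := rfl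
  have hB : 0 < betaFn a b := betaFn_pos ha hb
  have hC := hbC_pos a b τ s ha hb hτ'
  have hCeq := hbC_eq a b τ s ha hb hτ'
  have hφ : 0 < Phi1 b 1 (a + b) s (1 - 1 / τ ^ 2) := by
    by_contra h
    push_neg at h
    rw [hCeq] at hC
    nlinarith [Real.exp_pos (-s), mul_pos (Real.exp_pos (-s)) hB]
  rw [h1, hbC_eq a b τ (s - t) ha hb hτ', hCeq,
    show -(s - t) = t + -s by ring, Real.exp_add]
  have he1 : Real.exp (-s) ≠ 0 := (Real.exp_pos _).ne'
  have hB' : betaFn a b ≠ 0 := hB.ne'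
  have k1 : Real.exp (-s) * (Real.exp (-s))⁻¹ = 1 := mul_inv_cancel₀ he1
  have k2 : betaFn a b * (betaFn a b)⁻¹ = 1 := mul_inv_cancel₀ hB'
  linear_combination (Real.exp t * Phi1 b 1 (a + b) (s - t) (1 - 1 / τ ^ 2) *
      (Phi1 b 1 (a + b) s (1 - 1 / τ ^ 2))⁻¹ * betaFn a b * (betaFn a b)⁻¹) * k1 +
    (Real.exp t * Phi1 b 1 (a + b) (s - t) (1 - 1 / τ ^ 2) *
      (Phi1 b 1 (a + b) s (1 - 1 / τ ^ 2))⁻¹) * k2
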